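/- arXiv:2208.01691 — 3 statements merged into one kernel-verified Lean document; each statement's English description precedes it below -/
import Mathlib

section
/- Let Y, w, w* be square-integrable random variables with E[w] = E[w*], cov(w* − w, w) = 0, var(w) > 0, var(w*) > 0, var(Y) > 0, and define R² := 1 − var(w)/var(w*) with R² < 1. Then |cov(w − w*, Y)| ≤ √(1 − cor(w,Y)²) · √((R²/(1−R²)) · var(Y) · var(w)). -/
open MeasureTheory ProbabilityTheory Filter Real

noncomputable def covar {Ω : Type*} [MeasurableSpace Ω] (μ : MeasureTheory.Measure Ω)
    (X Y : Ω → ℝ) : ℝ :=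
  ∫ ω, (X ω - ∫ ω', X ω' ∂μ) * (Y ω - ∫ ω', Y ω' ∂μ) ∂μ

noncomputable def pvar {Ω : Type*} [MeasurableSpace Ω] (μ : MeasureTheory.Measure Ω)
    (X : Ω → ℝ) : ℝ :=
  covar μ X X

noncomputable def pcor {Ω : Type*} [MeasurableSpace Ω] (μ : MeasureTheory.Measure Ω)
    (X Y : Ω → ℝ) : ℝ :=
  covar μ X Y / (Real.sqrt (pvar μ X) * Real.sqrt (pvar μ Y))

section helpers

variable {Ω : Type*} [MeasurableSpace Ω] {μ : MeasureTheory.Measure Ω}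
  [IsProbabilityMeasure μ] {X Y Z : Ω → ℝ}

lemma my_mul_int (hX : MemLp X 2 μ) (hY : MemLp Y 2 μ) :
    Integrable (fun ω => X ω * Y ω) μ := by
  have h1 := (hX.add hY).integrable_sq
  have h2 := hX.integrable_sq
  have h3 := hY.integrable_sq
  have : (fun ω => X ω * Y ω)
      = fun ω => (((X ω + Y ω) ^ 2 - X ω ^ 2) - Y ω ^ 2) / 2 := funext fun ω => by ring
  rw [this]
  exact ((h1.sub h2).sub h3).div_const 2

lemma my_center (hX : MemLp X 2 μ) (c : ℝ) : MemLp (fun ω => X ω - c) 2 μ :=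
  hX.sub (memLp_const c)

lemma my_mul_int' (hX : MemLp X 2 μ) (hY : MemLp Y 2 μ) (a b : ℝ) :
    Integrable (fun ω => (X ω - a) * (Y ω - b)) μ :=
  my_mul_int (my_center hX a) (my_center hY b)

lemma covar_comm (X Y : Ω → ℝ) : covar μ X Y = covar μ Y X := by
  unfold covar; simp_rw [mul_comm]

lemma covar_sub_left (hX : MemLp X 2 μ) (hY : MemLp Y 2 μ) (hZ : MemLp Z 2 μ) :
    covar μ (fun ω => X ω - Y ω) Z = covar μ X Z - covar μ Y Z := by
  unfold covar
  rw [integral_sub (hX.integrable one_le_two) (hY.integrable one_le_two),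
    ← integral_sub (my_mul_int' hX hZ _ _) (my_mul_int' hY hZ _ _)]
  exact integral_congr_ae (Filter.Eventually.of_forall fun ω => by ring)

lemma covar_smul_left (c : ℝ) (hX : MemLp X 2 μ) (hZ : MemLp Z 2 μ) :
    covar μ (fun ω => c * X ω) Z = c * covar μ X Z := by
  have h1 : covar μ (fun ω => c * X ω) Z
      = ∫ ω, c * ((X ω - ∫ ω', X ω' ∂μ) * (Z ω - ∫ ω', Z ω' ∂μ)) ∂μ := by
    unfold covar
    rw [show (∫ ω', (fun ω => c * X ω) ω' ∂μ) = c * ∫ ω', X ω' ∂μ from integral_const_mul c X]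
    exact integral_congr_ae (Filter.Eventually.of_forall fun ω => by ring)
  rw [h1, integral_const_mul]
  rfl

lemma pvar_nonneg (X : Ω → ℝ) : 0 ≤ pvar μ X :=
  integral_nonneg fun ω => mul_self_nonneg _

lemma covar_sq_le (hX : MemLp X 2 μ) (hY : MemLp Y 2 μ) :
    (covar μ X Y) ^ 2 ≤ pvar μ X * pvar μ Y := by
  set X' := fun ω => X ω - ∫ ω', X ω' ∂μ with hX'def
  set Y' := fun ω => Y ω - ∫ ω', Y ω' ∂μ with hY'def
  have hX' : MemLp X' 2 μ := my_center hX _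
  have hY' : MemLp Y' 2 μ := my_center hY _
  set f : Lp ℝ 2 μ := hX'.toLp X'
  set g : Lp ℝ 2 μ := hY'.toLp Y'
  have key : ∀ (u v : Ω → ℝ) (hu : MemLp u 2 μ) (hv : MemLp v 2 μ),
      (inner ℝ (hu.toLp u) (hv.toLp v) : ℝ) = ∫ ω, u ω * v ω ∂μ := by
    intro u v hu hv
    rw [MeasureTheory.L2.inner_def]
    refine integral_congr_ae ?_
    filter_upwards [hu.coeFn_toLp, hv.coeFn_toLp] with ω h1 h2
    simp [h1, h2, RCLike.inner_apply, mul_comm]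
  have h1 : covar μ X Y = (inner ℝ f g : ℝ) := (key X' Y' hX' hY').symm
  have h2 : pvar μ X = (inner ℝ f f : ℝ) := (key X' X' hX' hX').symm
  have h3 : pvar μ Y = (inner ℝ g g : ℝ) := (key Y' Y' hY' hY').symm
  rw [h1, h2, h3, sq]
  exact real_inner_mul_inner_self_le f g

end helpers

theorem stmt3 {Ω : Type*} [MeasurableSpace Ω] (μ : MeasureTheory.Measure Ω)
    [IsProbabilityMeasure μ] (Y w wstar : Ω → ℝ)
    (hY : MemLp Y 2 μ) (hw : MemLp w 2 μ) (hwstar : MemLp wstar 2 μ)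
    (hmean : ∫ ω, w ω ∂μ = ∫ ω, wstar ω ∂μ)
    (horth : covar μ (fun ω => wstar ω - w ω) w = 0)
    (hvw : 0 < pvar μ w) (hvwstar : 0 < pvar μ wstar) (hvY : 0 < pvar μ Y)
    (R2 : ℝ) (hR2 : R2 = 1 - pvar μ w / pvar μ wstar) (hR2lt : R2 < 1) :
    |covar μ (fun ω => w ω - wstar ω) Y|
      ≤ Real.sqrt (1 - (pcor μ w Y) ^ 2)
          * Real.sqrt ((R2 / (1 - R2)) * pvar μ Y * pvar μ w) := by
  set d := fun ω => wstar ω - w ω with hddef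
  have hd : MemLp d 2 μ := hwstar.sub hw
  -- cov(wstar, w) = var w
  have h0 : covar μ d w = covar μ wstar w - covar μ w w := covar_sub_left hwstar hw hw
  have hdw : covar μ d w = 0 := horth
  have hwd : covar μ w d = 0 := by rw [covar_comm]; exact hdw
  have hcovwsw : covar μ wstar w = pvar μ w := by
    have : covar μ w w = pvar μ w := rfl
    linarith
  have hcovwws : covar μ w wstar = pvar μ w := by rw [covar_comm]; exact hcovwsw
  -- var d = var wstar - var w
  have hvd : pvar μ d = pvar μ wstar - pvar μ w := by
    have h1 : covar μ d d = covar μ wstar d - covar μ w d := covar_sub_left hwstar hw hd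
    have h2 : covar μ d wstar = covar μ wstar wstar - covar μ w wstar :=
      covar_sub_left hwstar hw hwstar
    have h3 : covar μ wstar d = covar μ d wstar := covar_comm wstar d
    have h4 : covar μ wstar wstar = pvar μ wstar := rfl
    have h5 : covar μ d d = pvar μ d := rfl
    linarith
  have hvd0 : 0 ≤ pvar μ d := pvar_nonneg d
  -- residual
  set β := covar μ w Y / pvar μ w with hβdef
  set Y2 := fun ω => Y ω - β * w ω with hY2def
  have hY2 : MemLp Y2 2 μ := hY.sub (hw.const_mul β)
  have hY2w : covar μ Y2 w = 0 := by
    have h1 : covar μ Y2 w = covar μ Y w - covar μ (fun ω => β * w ω) w :=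
      covar_sub_left hY (hw.const_mul β) hw
    rw [covar_smul_left β hw hw] at h1
    have h2 : covar μ Y w = covar μ w Y := covar_comm Y w
    have h3 : covar μ w w = pvar μ w := rfl
    rw [h1, h2, h3, hβdef]
    field_simp
    ring
  have hwY2 : covar μ w Y2 = 0 := by rw [covar_comm]; exact hY2w
  have hvY2 : pvar μ Y2 = pvar μ Y - (covar μ w Y) ^ 2 / pvar μ w := by
    have h1 : covar μ Y2 Y2 = covar μ Y Y2 - covar μ (fun ω => β * w ω) Y2 :=
      covar_sub_left hY (hw.const_mul β) hY2
    rw [covar_smul_left β hw hY2, hwY2, mul_zero, sub_zero] at h1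
    have h2 : covar μ Y Y2 = covar μ Y2 Y := covar_comm Y Y2
    have h3 : covar μ Y2 Y = covar μ Y Y - covar μ (fun ω => β * w ω) Y :=
      covar_sub_left hY (hw.const_mul β) hY
    rw [covar_smul_left β hw hY] at h3
    have h4 : covar μ Y Y = pvar μ Y := rfl
    have h5 : covar μ Y2 Y2 = pvar μ Y2 := rfl
    have h7 : pvar μ Y2 = pvar μ Y - β * covar μ w Y := by
      rw [← h4, ← h5, h1, h2, h3]
    rw [h7, hβdef]
    field_simp
  have hvY20 : 0 ≤ pvar μ Y2 := pvar_nonneg Y2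
  -- cov(d, Y2) = cov(d, Y)
  have hdY2 : covar μ d Y2 = covar μ d Y := by
    have h1 : covar μ Y2 d = covar μ Y d - covar μ (fun ω => β * w ω) d :=
      covar_sub_left hY (hw.const_mul β) hd
    rw [covar_smul_left β hw hd, hwd, mul_zero, sub_zero] at h1
    rw [covar_comm d Y2, h1, covar_comm Y d]
  -- Cauchy-Schwarz
  have hCS : (covar μ d Y2) ^ 2 ≤ pvar μ d * pvar μ Y2 := covar_sq_le hd hY2
  -- LHS
  have hL : covar μ (fun ω => w ω - wstar ω) Y = - covar μ d Y := by
    have h1 : covar μ (fun ω => w ω - wstar ω) Y = covar μ w Y - covar μ wstar Y :=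
      covar_sub_left hw hwstar hY
    have h2 : covar μ d Y = covar μ wstar Y - covar μ w Y := covar_sub_left hwstar hw hY
    linarith
  -- RHS simplification
  have hcorsq : 1 - (pcor μ w Y) ^ 2 = pvar μ Y2 / pvar μ Y := by
    have h1 : (Real.sqrt (pvar μ w) * Real.sqrt (pvar μ Y)) ^ 2 = pvar μ w * pvar μ Y := by
      rw [mul_pow, Real.sq_sqrt hvw.le, Real.sq_sqrt hvY.le]
    have h2 : (pcor μ w Y) ^ 2 = (covar μ w Y) ^ 2 / (pvar μ w * pvar μ Y) := by
      rw [pcor, div_pow, h1]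
    rw [h2, hvY2]
    field_simp
  have hR2fac : R2 / (1 - R2) * pvar μ Y * pvar μ w = pvar μ d * pvar μ Y := by
    have h1 : 1 - R2 = pvar μ w / pvar μ wstar := by rw [hR2]; ring
    rw [h1, hR2, hvd]
    field_simp
  rw [hL, abs_neg, ← hdY2, hcorsq, hR2fac]
  have habs : |covar μ d Y2| = Real.sqrt ((covar μ d Y2) ^ 2) := (Real.sqrt_sq_eq_abs _).symm
  rw [habs, ← Real.sqrt_mul (by positivity) (pvar μ d * pvar μ Y)]
  apply Real.sqrt_le_sqrt
  calc (covar μ d Y2) ^ 2 ≤ pvar μ d * pvar μ Y2 := hCS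
    _ = pvar μ Y2 / pvar μ Y * (pvar μ d * pvar μ Y) := by field_simp
end

section
/- Let w, w* be square-integrable random variables with E[w] = E[w*] = 1, var(w) > 0, and suppose w > 0 almost surely. Define λ := w*/w and R² := 1 − var(w)/var(w*), and assume cov(w* − w, w) = 0 and R² < 1. Then cov(λ², w²)/E[w²] + E[λ²] = (1/(1−R²))·(1 − R²/E[w²]). -/
open MeasureTheory ProbabilityTheory Filter Real

lemma covar_eq' {Ω : Type*} [MeasurableSpace Ω] (μ : MeasureTheory.Measure Ω)
    [IsProbabilityMeasure μ] (X Y : Ω → ℝ) (hX : Integrable X μ) (hY : Integrable Y μ)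
    (hXY : Integrable (fun ω => X ω * Y ω) μ) :
    covar μ X Y = (∫ ω, X ω * Y ω ∂μ) - (∫ ω, X ω ∂μ) * (∫ ω, Y ω ∂μ) := by
  unfold covar
  set a := ∫ ω', X ω' ∂μ
  set b := ∫ ω', Y ω' ∂μ
  have h : ∀ ω, (X ω - a) * (Y ω - b) = X ω * Y ω - (a * Y ω + b * X ω - a * b) := by
    intro ω; ring
  simp only [h]
  have hI2 : Integrable (fun ω => a * Y ω + b * X ω) μ := (hY.const_mul a).add (hX.const_mul b)
  have hI1 : Integrable (fun ω => a * Y ω + b * X ω - a * b) μ := hI2.sub (integrable_const _)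
  rw [integral_sub hXY hI1, integral_sub hI2 (integrable_const _),
    integral_add (hY.const_mul a) (hX.const_mul b), integral_const_mul, integral_const_mul,
    integral_const]
  simp
  ring

theorem stmt5 {Ω : Type*} [MeasurableSpace Ω] (μ : MeasureTheory.Measure Ω)
    [IsProbabilityMeasure μ] (w wstar : Ω → ℝ)
    (hw : MemLp w 2 μ) (hwstar : MemLp wstar 2 μ)
    (hwpos : ∀ᵐ ω ∂μ, 0 < w ω)
    (hmeanw : ∫ ω, w ω ∂μ = 1) (hmeanwstar : ∫ ω, wstar ω ∂μ = 1)
    (hvw : 0 < pvar μ w)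
    (lam : Ω → ℝ) (hlam : ∀ ω, lam ω = wstar ω / w ω)
    (hlamInt : MeasureTheory.Integrable (fun ω => (lam ω) ^ 2) μ)
    (horth : covar μ (fun ω => wstar ω - w ω) w = 0)
    (R2 : ℝ) (hR2 : R2 = 1 - pvar μ w / pvar μ wstar) (hR2lt : R2 < 1) :
    covar μ (fun ω => (lam ω) ^ 2) (fun ω => (w ω) ^ 2) / (∫ ω, (w ω) ^ 2 ∂μ)
        + (∫ ω, (lam ω) ^ 2 ∂μ)
      = (1 / (1 - R2)) * (1 - R2 / (∫ ω, (w ω) ^ 2 ∂μ)) := by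
  have hIw : Integrable w μ := hw.integrable one_le_two
  have hIws : Integrable wstar μ := hwstar.integrable one_le_two
  have hIw2 : Integrable (fun ω => (w ω) ^ 2) μ := hw.integrable_sq
  have hIws2 : Integrable (fun ω => (wstar ω) ^ 2) μ := hwstar.integrable_sq
  -- λ² w² = wstar² a.e.
  have hae : (fun ω => (lam ω) ^ 2 * (w ω) ^ 2) =ᵐ[μ] (fun ω => (wstar ω) ^ 2) := by
    filter_upwards [hwpos] with ω hp
    rw [hlam ω]
    field_simp
  have hIlw : Integrable (fun ω => (lam ω) ^ 2 * (w ω) ^ 2) μ := hIws2.congr hae.symm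
  have hintlw : ∫ ω, (lam ω) ^ 2 * (w ω) ^ 2 ∂μ = ∫ ω, (wstar ω) ^ 2 ∂μ :=
    integral_congr_ae hae
  -- pvar formulas
  have hpw : pvar μ w = (∫ ω, (w ω) ^ 2 ∂μ) - 1 := by
    have := covar_eq' μ w w hIw hIw (by simpa [pow_two] using hIw2)
    unfold pvar
    rw [this, hmeanw]
    simp [pow_two]
  have hpws : pvar μ wstar = (∫ ω, (wstar ω) ^ 2 ∂μ) - 1 := by
    have := covar_eq' μ wstar wstar hIws hIws (by simpa [pow_two] using hIws2)
    unfold pvar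
    rw [this, hmeanwstar]
    simp [pow_two]
  have hcov : covar μ (fun ω => (lam ω) ^ 2) (fun ω => (w ω) ^ 2)
      = (∫ ω, (wstar ω) ^ 2 ∂μ) - (∫ ω, (lam ω) ^ 2 ∂μ) * (∫ ω, (w ω) ^ 2 ∂μ) := by
    rw [covar_eq' μ _ _ hlamInt hIw2 hIlw, hintlw]
  set a := pvar μ w with ha
  set b := pvar μ wstar with hb
  have hbpos : 0 < b := by
    by_contra h
    push_neg at h
    rcases lt_or_eq_of_le h with h' | h'
    · have : a / b < 0 := div_neg_of_pos_of_neg hvw h'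
      nlinarith [hR2lt, hR2]
    · rw [hR2, h'] at hR2lt
      simp at hR2lt
  have hw2 : ∫ ω, (w ω) ^ 2 ∂μ = a + 1 := by rw [hpw]; ring
  have hws2 : ∫ ω, (wstar ω) ^ 2 ∂μ = b + 1 := by rw [hpws]; ring
  rw [hcov, hw2, hws2, hR2]
  have ha1 : (a : ℝ) + 1 ≠ 0 := by positivity
  have ha0 : a ≠ 0 := ne_of_gt hvw
  field_simp
  ring_nf
  rw [mul_assoc, mul_inv_cancel₀ ha0]
  ring
end

section
/- Let Y, w, w* be square-integrable with E[w]=E[w*], cov(w−w*, w)=0, var(w)>0, var(w*)>0, var(Y)>0, and R² := 1 − var(w)/var(w*) ∈ (0,1). Then cor(w − w*, Y) = cor(w, Y)·√((1−R²)/R²) − cor(w*, Y)·√(1/R²). -/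
open MeasureTheory ProbabilityTheory Filter Real

lemma aux_int_mul {Ω : Type*} [MeasurableSpace Ω] {μ : MeasureTheory.Measure Ω}
    {f g : Ω → ℝ} (hf : MemLp f 2 μ) (hg : MemLp g 2 μ) :
    Integrable (fun ω => f ω * g ω) μ := by
  have h := hg.smul (p := 2) (q := 2) (r := 1) hf
  rw [← memLp_one_iff_integrable]
  exact h

lemma aux_center {Ω : Type*} [MeasurableSpace Ω] {μ : MeasureTheory.Measure Ω}
    [IsProbabilityMeasure μ] {f : Ω → ℝ} (hf : MemLp f 2 μ) (c : ℝ) :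
    MemLp (fun ω => f ω - c) 2 μ :=
  hf.sub (memLp_const c)

lemma covar_sub_left_s16 {Ω : Type*} [MeasurableSpace Ω] (μ : MeasureTheory.Measure Ω)
    [IsProbabilityMeasure μ] {f g h : Ω → ℝ}
    (hf : MemLp f 2 μ) (hg : MemLp g 2 μ) (hh : MemLp h 2 μ) :
    covar μ (fun ω => f ω - g ω) h = covar μ f h - covar μ g h := by
  have hfi : Integrable f μ := hf.integrable one_le_two
  have hgi : Integrable g μ := hg.integrable one_le_two
  have hmean : ∫ ω, (f ω - g ω) ∂μ = (∫ ω, f ω ∂μ) - ∫ ω, g ω ∂μ :=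
    integral_sub hfi hgi
  unfold covar
  rw [hmean]
  have h1 : Integrable (fun ω => (f ω - ∫ ω', f ω' ∂μ) * (h ω - ∫ ω', h ω' ∂μ)) μ :=
    aux_int_mul (aux_center hf _) (aux_center hh _)
  have h2 : Integrable (fun ω => (g ω - ∫ ω', g ω' ∂μ) * (h ω - ∫ ω', h ω' ∂μ)) μ :=
    aux_int_mul (aux_center hg _) (aux_center hh _)
  rw [← integral_sub h1 h2]
  congr 1; ext ω; ring

theorem stmt16 {Ω : Type*} [MeasurableSpace Ω] (μ : MeasureTheory.Measure Ω)
    [IsProbabilityMeasure μ] (Y w wstar : Ω → ℝ)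
    (hY : MemLp Y 2 μ) (hw : MemLp w 2 μ) (hwstar : MemLp wstar 2 μ)
    (hmean : ∫ ω, w ω ∂μ = ∫ ω, wstar ω ∂μ)
    (horth : covar μ (fun ω => w ω - wstar ω) w = 0)
    (hvw : 0 < pvar μ w) (hvwstar : 0 < pvar μ wstar) (hvY : 0 < pvar μ Y)
    (R2 : ℝ) (hR2 : R2 = 1 - pvar μ w / pvar μ wstar)
    (hR2mem : R2 ∈ Set.Ioo (0 : ℝ) 1) :
    pcor μ (fun ω => w ω - wstar ω) Y
      = pcor μ w Y * Real.sqrt ((1 - R2) / R2)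
        - pcor μ wstar Y * Real.sqrt (1 / R2) := by
  have hD : MemLp (fun ω => w ω - wstar ω) 2 μ := hw.sub hwstar
  -- covariance symmetry
  have csymm : ∀ f g : Ω → ℝ, covar μ f g = covar μ g f := by
    intro f g; unfold covar; congr 1; ext ω; ring
  -- cov(D, w) = var w - cov(w*, w)
  have hDw : covar μ (fun ω => w ω - wstar ω) w = pvar μ w - covar μ wstar w :=
    covar_sub_left_s16 μ hw hwstar hw
  have hcww : covar μ wstar w = pvar μ w := by
    have := horth; rw [hDw] at this; linarith
  -- var D
  have hDws : covar μ (fun ω => w ω - wstar ω) wstar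
      = covar μ w wstar - pvar μ wstar :=
    covar_sub_left_s16 μ hw hwstar hwstar
  have hvD : pvar μ (fun ω => w ω - wstar ω) = pvar μ wstar - pvar μ w := by
    have h1 : pvar μ (fun ω => w ω - wstar ω)
        = covar μ (fun ω => w ω - wstar ω) w
          - covar μ (fun ω => w ω - wstar ω) wstar := by
      unfold pvar
      rw [csymm (fun ω => w ω - wstar ω)]
      rw [covar_sub_left_s16 μ hw hwstar hD]
      rw [csymm w, csymm wstar]
    rw [h1, horth, hDws, csymm w wstar, hcww]; ring
  have hDY : covar μ (fun ω => w ω - wstar ω) Y = covar μ w Y - covar μ wstar Y :=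
    covar_sub_left_s16 μ hw hwstar hY
  obtain ⟨hR2pos, hR2lt⟩ := hR2mem
  -- var D = R2 * var wstar
  have hvDval : pvar μ (fun ω => w ω - wstar ω) = R2 * pvar μ wstar := by
    rw [hvD, hR2]; field_simp
  have hvDpos : 0 < pvar μ (fun ω => w ω - wstar ω) := by
    rw [hvDval]; positivity
  have h1R2 : 1 - R2 = pvar μ w / pvar μ wstar := by rw [hR2]; ring
  have hR2eq : R2 = pvar μ (fun ω => w ω - wstar ω) / pvar μ wstar := by
    rw [hvDval]; field_simp
  set vD := pvar μ (fun ω => w ω - wstar ω) with hvDdef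
  have e1 : (1 - R2) / R2 = pvar μ w / vD := by
    rw [h1R2, hR2eq]
    field_simp
  have e2 : 1 / R2 = pvar μ wstar / vD := by
    rw [hR2eq, one_div, inv_div, div_eq_div_iff (ne_of_gt hvDpos) (ne_of_gt hvDpos)]
  have sw : (0:ℝ) < Real.sqrt (pvar μ w) := Real.sqrt_pos.mpr hvw
  have sws : (0:ℝ) < Real.sqrt (pvar μ wstar) := Real.sqrt_pos.mpr hvwstar
  have sY : (0:ℝ) < Real.sqrt (pvar μ Y) := Real.sqrt_pos.mpr hvY
  have sD : (0:ℝ) < Real.sqrt vD := Real.sqrt_pos.mpr hvDpos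
  unfold pcor
  rw [hDY, e1, e2, Real.sqrt_div hvw.le, Real.sqrt_div hvwstar.le]
  rw [← hvDdef]
  field_simp
end
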